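/- Let (X_i) be a stationary sequence adapted to a filtration (F_i) with X_i = X₀∘T^i, and set S_n = X₁+⋯+X_n. If Σ_{k≥1} ||E(X_k|F₀)||_2 / k^{1/2} < ∞, then the Maxwell–Woodroofe condition Σ_{k≥1} ||E(S_k|F₀)||_2 / k^{3/2} < ∞ holds. -/

import Mathlib

open MeasureTheory ProbabilityTheory Finset

noncomputable section

private lemma sqrt_key (i : ℕ) :
    (((i : ℝ) + 1) * Real.sqrt ((i : ℝ) + 1))⁻¹ ≤
      8 * ((Real.sqrt ((i : ℝ) + 1))⁻¹ - (Real.sqrt ((i : ℝ) + 2))⁻¹) := by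
  have hi : (0:ℝ) ≤ (i:ℝ) := Nat.cast_nonneg i
  set u := Real.sqrt ((i : ℝ) + 1) with hu
  set v := Real.sqrt ((i : ℝ) + 2) with hv
  have hu0 : 0 < u := Real.sqrt_pos.mpr (by linarith)
  have hv0 : 0 < v := Real.sqrt_pos.mpr (by linarith)
  have hu2 : u ^ 2 = (i : ℝ) + 1 := Real.sq_sqrt (by linarith)
  have hv2 : v ^ 2 = (i : ℝ) + 2 := Real.sq_sqrt (by linarith)
  have hu1 : 1 ≤ u := by nlinarith [hu2, hu0]
  have huv : u ≤ v := by
    rw [hu, hv]; exact Real.sqrt_le_sqrt (by linarith)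
  have hv2u : v ≤ 2 * u := by
    have h1 : ((i:ℝ) + 2) ≤ 2 ^ 2 * ((i:ℝ) + 1) := by linarith
    calc v ≤ Real.sqrt (2 ^ 2 * ((i:ℝ) + 1)) := Real.sqrt_le_sqrt h1
      _ = 2 * u := by
          rw [Real.sqrt_mul (by positivity), Real.sqrt_sq (by norm_num)]
  have hprod : (v - u) * (v + u) = 1 := by nlinarith
  have h8 : 8 * (u⁻¹ - v⁻¹) = 8 * (v - u) / (u * v) := by
    field_simp
  rw [← hu2, h8, inv_eq_one_div, div_le_div_iff₀ (by positivity) (by positivity)]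
  -- goal : 1 * (u * v) ≤ 8 * (v - u) * (u ^ 2 * u)
  have h9 : u * v * (v + u) ≤ 8 * (u ^ 2 * u) := by
    nlinarith [mul_nonneg (mul_nonneg (sub_nonneg.mpr hv2u) hu0.le) hu0.le,
      mul_nonneg (mul_nonneg (sub_nonneg.mpr hv2u) hu0.le) hv0.le, hu1, hu0.le, hv0.le]
  nlinarith [h9, hprod, mul_pos hu0 hv0, hu0, hv0, mul_pos (mul_pos hu0 hu0) hu0]

private lemma rpow32 (n : ℕ) :
    ((n : ℝ) + 1) ^ ((3 : ℝ) / 2) = ((n : ℝ) + 1) * Real.sqrt ((n : ℝ) + 1) := by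
  have h : (0:ℝ) < (n : ℝ) + 1 := by positivity
  rw [show (3:ℝ)/2 = 1 + 1/2 by norm_num, Real.rpow_add h, Real.rpow_one,
    Real.sqrt_eq_rpow]

private lemma rpow12 (k : ℕ) :
    ((k : ℝ) + 1) ^ ((1 : ℝ) / 2) = Real.sqrt ((k : ℝ) + 1) :=
  (Real.sqrt_eq_rpow _).symm

private lemma sumbase : Summable (fun n : ℕ => ((((n : ℝ) + 1)) ^ ((3 : ℝ) / 2))⁻¹) := by
  have h := (Real.summable_one_div_nat_rpow (p := 3/2)).mpr (by norm_num)
  have h2 := h.comp_injective (add_left_injective 1)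
  refine h2.congr fun n => ?_
  simp [Function.comp, one_div]

private lemma tail_summable (k : ℕ) :
    Summable (fun n : ℕ => if k ≤ n then ((((n : ℝ) + 1)) ^ ((3 : ℝ) / 2))⁻¹ else 0) := by
  refine Summable.of_nonneg_of_le (fun n => ?_) (fun n => ?_) sumbase
  · split_ifs <;> positivity
  · split_ifs
    · exact le_rfl
    · positivity

private lemma tail_bound (k : ℕ) :
    ∑' n : ℕ, (if k ≤ n then ((((n : ℝ) + 1)) ^ ((3 : ℝ) / 2))⁻¹ else 0)
      ≤ 8 / ((k : ℝ) + 1) ^ ((1 : ℝ) / 2) := by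
  set g : ℕ → ℝ := fun i => (Real.sqrt ((i : ℝ) + 1))⁻¹ with hg
  apply Summable.tsum_le_of_sum_le (tail_summable k)
  intro s
  obtain ⟨N, hN⟩ := s.exists_nat_subset_range
  have hnonneg : ∀ i : ℕ, 0 ≤ (if k ≤ i then ((((i : ℝ) + 1)) ^ ((3 : ℝ) / 2))⁻¹ else 0) := by
    intro i; split_ifs <;> positivity
  calc ∑ i ∈ s, (if k ≤ i then ((((i : ℝ) + 1)) ^ ((3 : ℝ) / 2))⁻¹ else 0)
      ≤ ∑ i ∈ range (k + N), (if k ≤ i then ((((i : ℝ) + 1)) ^ ((3 : ℝ) / 2))⁻¹ else 0) := by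
        refine Finset.sum_le_sum_of_subset_of_nonneg
          (hN.trans (Finset.range_subset_range.mpr (by omega))) (fun i _ _ => hnonneg i)
    _ = ∑ i ∈ Finset.Ico k (k + N), ((((i : ℝ) + 1)) ^ ((3 : ℝ) / 2))⁻¹ := by
        rw [Finset.range_eq_Ico, ← Finset.sum_Ico_consecutive _ (Nat.zero_le k)
          (Nat.le_add_right k N)]
        have h1 : ∑ i ∈ Finset.Ico 0 k,
            (if k ≤ i then ((((i : ℝ) + 1)) ^ ((3 : ℝ) / 2))⁻¹ else 0) = 0 := by
          apply Finset.sum_eq_zero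
          intro i hi
          rw [Finset.mem_Ico] at hi
          exact if_neg (by omega)
        rw [h1, zero_add]
        exact Finset.sum_congr rfl fun i hi => if_pos (Finset.mem_Ico.mp hi).1
    _ ≤ ∑ i ∈ Finset.Ico k (k + N), 8 * (g i - g (i + 1)) := by
        refine Finset.sum_le_sum fun i _ => ?_
        rw [rpow32]
        have := sqrt_key i
        simpa [hg, show (i:ℝ) + 1 + 1 = (i:ℝ) + 2 by ring] using this
    _ = 8 * (g k - g (k + N)) := by
        rw [← Finset.mul_sum]
        congr 1
        rw [Finset.sum_Ico_eq_sum_range]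
        have : ∀ j : ℕ, g (k + j + 1) = g (k + (j + 1)) := fun j => by
          rw [Nat.add_assoc]
        calc ∑ j ∈ range (k + N - k), (g (k + j) - g (k + j + 1))
            = ∑ j ∈ range N, ((fun j => g (k + j)) j - (fun j => g (k + j)) (j + 1)) := by
              rw [show k + N - k = N by omega]
              exact Finset.sum_congr rfl fun j _ => by rw [this j]
          _ = g (k + 0) - g (k + N) := Finset.sum_range_sub' (fun j => g (k + j)) N
          _ = g k - g (k + N) := by rw [Nat.add_zero]
    _ ≤ 8 * g k := by
        have : 0 ≤ g (k + N) := by simp only [hg]; positivity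
        nlinarith
    _ = 8 / ((k : ℝ) + 1) ^ ((1 : ℝ) / 2) := by
        rw [rpow12, hg, div_eq_mul_inv]

set_option maxHeartbeats 1000000 in
private lemma summableA (a : ℕ → ℝ) (ha : ∀ k, 0 ≤ a k)
    (hsum : Summable fun k : ℕ => a k / ((k : ℝ) + 1) ^ ((1 : ℝ) / 2)) :
    Summable fun n : ℕ =>
      (∑ k ∈ Finset.range (n + 1), a k) / ((n : ℝ) + 1) ^ ((3 : ℝ) / 2) := by
  set f : ℕ × ℕ → ℝ := fun p =>
    if p.1 ≤ p.2 then a p.1 / ((p.2 : ℝ) + 1) ^ ((3 : ℝ) / 2) else 0 with hf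
  have hf0 : 0 ≤ f := by
    intro p
    simp only [hf]
    split_ifs
    · exact div_nonneg (ha _) (by positivity)
    · exact le_rfl
  have hfactor : ∀ k n : ℕ, f (k, n) =
      a k * (if k ≤ n then ((((n : ℝ) + 1)) ^ ((3 : ℝ) / 2))⁻¹ else 0) := by
    intro k n
    simp only [hf]
    split_ifs
    · rw [div_eq_mul_inv]
    · rw [mul_zero]
  have hrow : ∀ k, Summable fun n => f (k, n) := by
    intro k
    refine ((tail_summable k).mul_left (a k)).congr fun n => (hfactor k n).symm
  have htsum : ∀ k, ∑' n, f (k, n) ≤ 8 * (a k / ((k : ℝ) + 1) ^ ((1 : ℝ) / 2)) := by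
    intro k
    calc ∑' n, f (k, n)
        = a k * ∑' n, (if k ≤ n then ((((n : ℝ) + 1)) ^ ((3 : ℝ) / 2))⁻¹ else 0) := by
          rw [← tsum_mul_left]
          exact tsum_congr fun n => hfactor k n
      _ ≤ a k * (8 / ((k : ℝ) + 1) ^ ((1 : ℝ) / 2)) :=
          mul_le_mul_of_nonneg_left (tail_bound k) (ha k)
      _ = 8 * (a k / ((k : ℝ) + 1) ^ ((1 : ℝ) / 2)) := by ring
  have hF : Summable f := by
    refine (summable_prod_of_nonneg hf0).mpr ⟨hrow, ?_⟩
    refine Summable.of_nonneg_of_le (fun k => tsum_nonneg fun n => hf0 (k, n))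
      htsum (hsum.mul_left 8)
  have hswap : Summable fun p : ℕ × ℕ => f (p.2, p.1) :=
    (Equiv.prodComm ℕ ℕ).summable_iff.mpr hF
  have hcol := ((summable_prod_of_nonneg (fun p => hf0 (p.2, p.1))).mp hswap).2
  refine hcol.congr fun n => ?_
  calc ∑' k, f (k, n) = ∑ k ∈ Finset.range (n + 1), f (k, n) := by
        refine tsum_eq_sum fun k hk => ?_
        rw [Finset.mem_range] at hk
        exact if_neg (by omega)
    _ = ∑ k ∈ Finset.range (n + 1), a k / ((n : ℝ) + 1) ^ ((3 : ℝ) / 2) := by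
        refine Finset.sum_congr rfl fun k hk => ?_
        rw [Finset.mem_range] at hk
        exact if_pos (by omega)
    _ = (∑ k ∈ Finset.range (n + 1), a k) / ((n : ℝ) + 1) ^ ((3 : ℝ) / 2) := by
        rw [Finset.sum_div]

private lemma memLp_iterate {Ω : Type*} {m : MeasurableSpace Ω} {μ : Measure Ω} {T : Ω → Ω}
    (hT : MeasurePreserving T μ μ) {f : Ω → ℝ} (hf : MemLp f 2 μ) (i : ℕ) :
    MemLp (f ∘ T^[i]) 2 μ :=
  hf.comp_measurePreserving (hT.iterate i)

private lemma memLp_condexp_two {Ω : Type*} {m : MeasurableSpace Ω} (μ : Measure Ω)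
    [IsProbabilityMeasure μ] (F₀ : MeasurableSpace Ω) (hF₀ : F₀ ≤ m) (f : Ω → ℝ)
    (hf : MemLp f 2 μ) : MemLp (μ[f|F₀]) 2 μ := by
  have hg := Lp.memLp (μ := μ) (E := ℝ) (p := 2) ↑(condExpL2 (μ := μ) ℝ ℝ hF₀ (hf.toLp f))
  refine hg.ae_eq ?_
  refine ae_eq_condExp_of_forall_setIntegral_eq hF₀ (hf.integrable one_le_two)
    (fun s hs hμs => integrableOn_condExpL2_of_measure_ne_top hF₀ hμs.ne _)
    (fun s hs hμs => ?_) (aestronglyMeasurable_condExpL2 hF₀ _)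
  rw [integral_condExpL2_eq hF₀ (hf.toLp f) hs hμs.ne]
  exact integral_congr_ae (ae_restrict_of_ae (hf.coeFn_toLp))

/-- If `Σ_k ‖E(X_k|F₀)‖₂ / k^{1/2} < ∞` then the Maxwell–Woodroofe condition
`Σ_k ‖E(S_k|F₀)‖₂ / k^{3/2} < ∞` holds, for a stationary adapted sequence. -/
theorem stmt4 {Ω : Type*} [m : MeasurableSpace Ω] (μ : Measure Ω) [IsProbabilityMeasure μ]
    (T : Ω → Ω) (hT : MeasurePreserving T μ μ) (hTbij : Function.Bijective T)
    (F₀ : MeasurableSpace Ω) (hF₀ : F₀ ≤ m)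
    (hF₀T : F₀ ≤ F₀.comap T)
    (X : ℕ → Ω → ℝ)
    (hX0meas : Measurable[F₀] (X 0))
    (hX0 : MemLp (X 0) 2 μ) (hX0c : ∫ ω, X 0 ω ∂μ = 0)
    (hstat : ∀ i, X i = X 0 ∘ T^[i])
    (S : ℕ → Ω → ℝ) (hS : ∀ n, S n = fun ω => ∑ i ∈ Finset.Icc 1 n, X i ω)
    (hsum : Summable fun k : ℕ =>
      (eLpNorm (μ[X (k + 1)|F₀]) 2 μ).toReal / ((k : ℝ) + 1) ^ ((1 : ℝ) / 2)) :
    Summable fun k : ℕ =>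
      (eLpNorm (μ[S (k + 1)|F₀]) 2 μ).toReal / ((k : ℝ) + 1) ^ ((3 : ℝ) / 2) := by
  have hXmem : ∀ i, MemLp (X i) 2 μ := by
    intro i
    rw [hstat i]
    exact memLp_iterate hT hX0 i
  have hXint : ∀ i, Integrable (X i) μ := fun i => (hXmem i).integrable one_le_two
  have hcondmem : ∀ i, MemLp (μ[X i|F₀]) 2 μ := fun i => memLp_condexp_two μ F₀ hF₀ (X i) (hXmem i)
  have hcond_ne : ∀ i, eLpNorm (μ[X i|F₀]) 2 μ ≠ ⊤ := fun i => (hcondmem i).eLpNorm_ne_top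
  set a : ℕ → ℝ := fun k => (eLpNorm (μ[X (k + 1)|F₀]) 2 μ).toReal with haa
  have ha : ∀ k, 0 ≤ a k := fun k => ENNReal.toReal_nonneg
  have hbound : ∀ n : ℕ, (eLpNorm (μ[S (n + 1)|F₀]) 2 μ).toReal
      ≤ ∑ k ∈ Finset.range (n + 1), a k := by
    intro n
    have hSfun : S (n + 1) = ∑ i ∈ Finset.Icc 1 (n + 1), X i := by
      rw [hS]
      funext ω
      rw [Finset.sum_apply]
    have hsum_eq : μ[S (n + 1)|F₀] =ᵐ[μ] ∑ i ∈ Finset.Icc 1 (n + 1), μ[X i|F₀] := by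
      rw [hSfun]
      exact condExp_finsetSum (fun i _ => hXint i) F₀
    have h1 : eLpNorm (μ[S (n + 1)|F₀]) 2 μ
        ≤ ∑ i ∈ Finset.Icc 1 (n + 1), eLpNorm (μ[X i|F₀]) 2 μ := by
      rw [eLpNorm_congr_ae hsum_eq]
      exact eLpNorm_sum_le
        (fun i _ => (stronglyMeasurable_condExp.mono hF₀).aestronglyMeasurable) one_le_two
    have hfin : ∑ i ∈ Finset.Icc 1 (n + 1), eLpNorm (μ[X i|F₀]) 2 μ ≠ ⊤ := by
      refine (ENNReal.sum_lt_top.mpr ?_).ne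
      exact fun i _ => (hcond_ne i).lt_top
    calc (eLpNorm (μ[S (n + 1)|F₀]) 2 μ).toReal
        ≤ (∑ i ∈ Finset.Icc 1 (n + 1), eLpNorm (μ[X i|F₀]) 2 μ).toReal :=
          ENNReal.toReal_mono hfin h1
      _ = ∑ i ∈ Finset.Icc 1 (n + 1), (eLpNorm (μ[X i|F₀]) 2 μ).toReal :=
          ENNReal.toReal_sum fun i _ => hcond_ne i
      _ = ∑ k ∈ Finset.range (n + 1), a k := by
          rw [show Finset.Icc 1 (n + 1) = Finset.Ico 1 (n + 2) by rw [show n + 2 = n + 1 + 1 by rfl, Finset.Ico_add_one_right_eq_Icc],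
            Finset.sum_Ico_eq_sum_range]
          refine Finset.sum_congr (by norm_num) fun k _ => ?_
          rw [haa]
          rw [Nat.add_comm 1 k]
  refine Summable.of_nonneg_of_le (fun n => ?_) (fun n => ?_) (summableA a ha hsum)
  · exact div_nonneg ENNReal.toReal_nonneg (by positivity)
  · exact div_le_div_of_nonneg_right (hbound n) (by positivity)
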